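/- arXiv:2001.03439 — 9 statements merged into one kernel-verified Lean document; each statement's English description precedes it below -/
import Mathlib

section
/- Let P be a nonzero subring of a ring Q without zero-divisors. If an additive function a : P → Q satisfies both a(xy) = a(x)a(y) and a(xy) = a(x)y + x·a(y) for all x, y ∈ P, then a is identically zero. -/
theorem stmt_5 (Q : Type*) [Ring Q] [NoZeroDivisors Q] (P : Subring Q)
    (hP : ∃ x : P, (x : Q) ≠ 0) (a : P → Q)
    (hadd : ∀ x y : P, a (x + y) = a x + a y)
    (hmul : ∀ x y : P, a (x * y) = a x * a y)
    (hleib : ∀ x y : P, a (x * y) = a x * y + x * a y) :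
    ∀ x : P, a x = 0 := by
  obtain ⟨x₀, hx₀⟩ := hP
  have hrel : ∀ x y : P, a x * a y = a x * y + x * a y := by
    intro x y; rw [← hmul, hleib]
  by_contra h
  push_neg at h
  obtain ⟨z₀, hz₀⟩ := h
  have key : ∀ x : P, a x = (x : Q) := by
    intro x
    have e1 : a x * a x₀ * a z₀ = a x * a x₀ * z₀ + (x : Q) * x₀ * a z₀ := by
      have := hrel (x * x₀) z₀
      rw [hmul] at this
      push_cast at this
      exact this
    have e2 : a x * a x₀ * a z₀ = a x * a x₀ * z₀ + a x * ((x₀ : Q) * a z₀) := by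
      rw [mul_assoc, hrel x₀ z₀, mul_add, ← mul_assoc]
    have e4 : (x : Q) * x₀ * a z₀ = a x * ((x₀ : Q) * a z₀) :=
      add_left_cancel (e1.symm.trans e2)
    have e3 : (((x : Q) - a x) * x₀) * a z₀ = 0 := by
      rw [sub_mul, sub_mul, e4, mul_assoc, sub_self]
    rcases mul_eq_zero.1 e3 with h1 | h1
    · rcases mul_eq_zero.1 h1 with h2 | h2
      · exact (sub_eq_zero.1 h2).symm
      · exact absurd h2 hx₀
    · exact absurd h1 hz₀
  have hl := hleib x₀ x₀
  rw [key, key] at hl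
  push_cast at hl
  have hsq : (x₀ : Q) * x₀ = 0 := (left_eq_add.1 hl)
  rcases mul_eq_zero.1 hsq with h | h <;> exact hx₀ h
end

section
/- Let 𝔽 be a subfield of a field 𝕂 and λ ∈ 𝕂 fixed. Functions f, k : 𝔽 → 𝕂 satisfy f(xy) = λ²xy + x·k(y) + k(x)·y for all x, y ∈ 𝔽 if and only if there exists a Leibniz function δ : 𝔽 → 𝕂 (i.e. δ(xy) = δ(x)y + x·δ(y)) such that k(x) = k(1)x + δ(x) and f(x) = (λ² + 2k(1))x + δ(x) for all x ∈ 𝔽. -/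
theorem stmt_7 (K : Type*) [Field K] (F : Subfield K) (lam : K) (f k : F → K) :
    (∀ x y : F, f (x * y) = lam ^ 2 * x * y + x * k y + k x * y) ↔
      ∃ δ : F → K, (∀ x y : F, δ (x * y) = δ x * y + x * δ y) ∧
        (∀ x : F, k x = k 1 * x + δ x) ∧
        ∀ x : F, f x = (lam ^ 2 + 2 * k 1) * x + δ x := by
  constructor
  · intro h
    refine ⟨fun x => k x - k 1 * x, ?_, ?_, ?_⟩
    · intro x y
      have e := h 1 (x * y)
      rw [one_mul] at e
      have e2 := h x y
      simp only []
      push_cast at e e2 ⊢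
      linear_combination e2 - e
    · intro x
      simp only []
      ring
    · intro x
      have e := h 1 x
      rw [one_mul] at e
      simp only []
      push_cast at e ⊢
      linear_combination e
  · rintro ⟨δ, hδ, hk, hf⟩
    intro x y
    have := hδ x y
    rw [hf (x * y), hk x, hk y, this]
    push_cast
    ring
end

section
/- Let 𝔽 be a subfield of a field 𝕂 and λ ∈ 𝕂 fixed. Additive functions f, k : 𝔽 → 𝕂 satisfy f(xy) = λ²xy + x·k(y) + k(x)·y for all x, y ∈ 𝔽 if and only if there exists a derivation d : 𝔽 → 𝕂 (additive, satisfying the Leibniz rule) such that k(x) = k(1)x + d(x) and f(x) = (λ² + 2k(1))x + d(x) for all x ∈ 𝔽. -/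
theorem stmt_8 (K : Type*) [Field K] (F : Subfield K) (lam : K) (f k : F → K)
    (hfadd : ∀ x y : F, f (x + y) = f x + f y)
    (hkadd : ∀ x y : F, k (x + y) = k x + k y) :
    (∀ x y : F, f (x * y) = lam ^ 2 * x * y + x * k y + k x * y) ↔
      ∃ d : F → K, (∀ x y : F, d (x + y) = d x + d y) ∧
        (∀ x y : F, d (x * y) = d x * y + x * d y) ∧
        (∀ x : F, k x = k 1 * x + d x) ∧
        ∀ x : F, f x = (lam ^ 2 + 2 * k 1) * x + d x := by
  constructor
  · intro h
    refine ⟨fun x => k x - k 1 * x, ?_, ?_, ?_, ?_⟩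
    · intro x y
      dsimp only
      rw [hkadd]
      push_cast
      ring
    · intro x y
      dsimp only
      have hf : ∀ z : F, f z = lam ^ 2 * z + z * k 1 + k z := by
        intro z
        have := h z 1
        simpa using this
      have h1 := h x y
      rw [hf (x * y)] at h1
      push_cast at h1 ⊢
      linear_combination h1
    · intro x; dsimp only; ring
    · intro x
      have := h x 1
      simp at this
      rw [this]; ring
  · rintro ⟨d, hdadd, hleib, hk, hf⟩ x y
    rw [hf (x * y), hk x, hk y, hleib]
    push_cast
    ring
end

section
/- Let 𝔽 be a subfield of a field 𝕂 and λ ∈ 𝕂 fixed. Functions f, h : 𝔽 → 𝕂 satisfy f(xy) = h(x)h(y) + 2λxy for all x, y ∈ 𝔽 if and only if there exists a multiplicative function m : 𝔽 → 𝕂 such that h(x) = h(1)·m(x) and f(x) = h(1)²·m(x) + 2λx for all x ∈ 𝔽. -/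
theorem stmt_9 (K : Type*) [Field K] (F : Subfield K) (lam : K) (f h : F → K) :
    (∀ x y : F, f (x * y) = h x * h y + 2 * lam * x * y) ↔
      ∃ m : F → K, (∀ x y : F, m (x * y) = m x * m y) ∧
        (∀ x : F, h x = h 1 * m x) ∧
        ∀ x : F, f x = h 1 ^ 2 * m x + 2 * lam * x := by
  constructor
  · intro hf
    by_cases h1 : h 1 = 0
    · have hzero : ∀ x : F, h x = 0 := by
        intro x
        have e1 := hf x 1
        have e2 := hf x x
        have hfx : f x = 2 * lam * x := by
          have := hf x 1
          simp [h1] at this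
          simpa using this
        have : h x * h x = 0 := by
          have e3 := hf (x*x) 1
          simp [h1] at e3
          have := hf x x
          rw [e3] at this
          linear_combination -this
        exact mul_self_eq_zero.mp this
      refine ⟨fun _ => 0, by simp, fun x => by simp [hzero], fun x => ?_⟩
      have := hf x 1
      simp [hzero] at this
      simpa [hzero, mul_assoc] using this
    · refine ⟨fun x => h x / h 1, ?_, ?_, ?_⟩
      · intro x y
        have key : h (x * y) * h 1 = h x * h y := by
          have e1 := hf x y
          have e2 := hf (x * y) 1
          simp at e2
          rw [e2] at e1
          linear_combination e1
        field_simp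
        linear_combination key
      · intro x; field_simp
      · intro x
        have := hf x 1
        simp at this
        rw [this]
        field_simp
  · rintro ⟨m, hm, hh, hf⟩ x y
    rw [hf (x * y), hm x y, hh x, hh y]
    push_cast
    ring
end

section
/- Let 𝔽 be a subfield of a field 𝕂. Functions f, h : 𝔽 → 𝕂 satisfy f(xy) = h(x)h(y) for all x, y ∈ 𝔽 if and only if there exists a multiplicative function m : 𝔽 → 𝕂 with h(x) = h(1)m(x) and f(x) = h(1)²m(x) for all x ∈ 𝔽. -/
theorem stmt_10 (K : Type*) [Field K] (F : Subfield K) (f h : F → K) :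
    (∀ x y : F, f (x * y) = h x * h y) ↔
      ∃ m : F → K, (∀ x y : F, m (x * y) = m x * m y) ∧
        (∀ x : F, h x = h 1 * m x) ∧
        ∀ x : F, f x = h 1 ^ 2 * m x := by
  constructor
  · intro hf
    by_cases h1 : h 1 = 0
    · refine ⟨fun _ => 0, by simp, ?_, ?_⟩
      · intro x
        have h0 : h x * h x = 0 := by
          rw [← hf x x]
          have := hf (x * x) 1
          simpa [h1] using this
        have : h x = 0 := by
          rcases mul_self_eq_zero.mp h0 with h
          exact h
        simp [this, h1]
      · intro x
        have := hf x 1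
        have hx : h x * h x = 0 := by
          rw [← hf x x]
          have := hf (x * x) 1
          simpa [h1] using this
        have hx0 : h x = 0 := mul_self_eq_zero.mp hx
        simpa [h1, hx0] using this
    · refine ⟨fun x => h x / h 1, ?_, ?_, ?_⟩
      · intro x y
        have key : h (x * y) * h 1 = h x * h y := by
          have e1 := hf (x * y) 1
          rw [mul_one] at e1
          rw [← e1, hf]
        field_simp
        linear_combination key
      · intro x
        field_simp
      · intro x
        have := hf x 1
        rw [mul_one] at this
        field_simp [this]
        linear_combination this
  · rintro ⟨m, hm, hh, hfm⟩
    intro x y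
    rw [hfm, hm, hh x, hh y]
    ring
end

section
/- Let 𝔽 be a subfield of a field 𝕂 with char(𝕂) ≠ 2, and let λ ∈ 𝕂 be nonzero. If functions f, k : 𝔽 → 𝕂 satisfy f(xy) = x·k(y) + k(x)·y + λ²·k(x)k(y) for all x, y ∈ 𝔽, then either there exists γ ∈ 𝕂 with k(x) = γx and f(x) = (λ²γ² + 2γ)x for all x ∈ 𝔽, or there exist a multiplicative function m : 𝔽 → 𝕂 and a constant γ ∈ 𝕂 with k(x) = −(1/λ²)x + γ·m(x) and f(x) = −(1/λ²)x + γ²λ²·m(x) for all x ∈ 𝔽. -/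
theorem stmt_11 (K : Type*) [Field K] (F : Subfield K) (h2 : (2 : K) ≠ 0)
    (lam : K) (hlam : lam ≠ 0) (f k : F → K)
    (heq : ∀ x y : F, f (x * y) = x * k y + k x * y + lam ^ 2 * k x * k y) :
    (∃ γ : K, (∀ x : F, k x = γ * x) ∧
        ∀ x : F, f x = (lam ^ 2 * γ ^ 2 + 2 * γ) * x) ∨
      (∃ m : F → K, (∀ x y : F, m (x * y) = m x * m y) ∧
        ∃ γ : K, (∀ x : F, k x = -(1 / lam ^ 2) * x + γ * m x) ∧
          ∀ x : F, f x = -(1 / lam ^ 2) * x + γ ^ 2 * lam ^ 2 * m x) := by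
  right
  have hL0 : lam ^ 2 ≠ 0 := pow_ne_zero 2 hlam
  set c : K := 1 + lam ^ 2 * k 1 with hc_def
  have key2 : ∀ x y : F, ((x : K) + lam ^ 2 * k x) * ((y : K) + lam ^ 2 * k y)
      = ((x : K) * y + lam ^ 2 * k (x * y)) * c := by
    intro x y
    have h1 := heq x y
    have h2 := heq (x * y) 1
    rw [mul_one] at h2
    push_cast at h1 h2
    linear_combination lam ^ 2 * h2 - lam ^ 2 * h1
  have fval : ∀ x : F, lam ^ 2 * f x = ((x : K) + lam ^ 2 * k x) * c - (x : K) := by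
    intro x
    have h := heq x 1
    rw [mul_one] at h
    push_cast at h
    linear_combination lam ^ 2 * h
  by_cases hc : c = 0
  · have hM0 : ∀ x : F, (x : K) + lam ^ 2 * k x = 0 := by
      intro x
      have h := key2 x x
      rw [hc, mul_zero] at h
      exact mul_self_eq_zero.mp h
    refine ⟨fun _ => 0, by intro x y; ring, 0, ?_, ?_⟩
    · intro x
      have h := hM0 x
      field_simp
      linear_combination h
    · intro x
      have h := fval x
      rw [hc, mul_zero] at h
      field_simp
      linear_combination h
  · refine ⟨fun x => ((x : K) + lam ^ 2 * k x) / c, ?_, c / lam ^ 2, ?_, ?_⟩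
    · intro x y
      have h := key2 x y
      push_cast
      field_simp
      linear_combination (-1) * h
    · intro x
      field_simp
      ring
    · intro x
      have h := fval x
      have hfx : f x = (((x : K) + lam ^ 2 * k x) * c - (x : K)) / lam ^ 2 := by
        rw [eq_div_iff hL0]; linear_combination h
      rw [hfx]; field_simp; ring
end

section
/- Let 𝔽 be a subfield of a field 𝕂 with char(𝕂) ≠ 2. Given a multiplicative function m : 𝔽 → 𝕂, a logarithmic function l : 𝔽× → 𝕂, and constants β, γ ∈ 𝕂, define h(x) = βx + (1−β)m(x) and k(x) = (γl(x) + β − β²)x + (β² − β)m(x) for nonzero x. Then h(xy) + k(xy) = h(x)h(y) + x·k(y) + k(x)·y for all nonzero x, y ∈ 𝔽. -/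
theorem stmt_13 (K : Type*) [Field K] (F : Subfield K) (h2 : (2 : K) ≠ 0)
    (m : F → K) (hm : ∀ x y : F, m (x * y) = m x * m y)
    (l : F → K) (hl : ∀ x y : F, x ≠ 0 → y ≠ 0 → l (x * y) = l x + l y)
    (β γ : K) (h k : F → K)
    (hh : ∀ x : F, x ≠ 0 → h x = β * x + (1 - β) * m x)
    (hk : ∀ x : F, x ≠ 0 → k x = (γ * l x + β - β ^ 2) * x + (β ^ 2 - β) * m x) :
    ∀ x y : F, x ≠ 0 → y ≠ 0 →
      h (x * y) + k (x * y) = h x * h y + x * k y + k x * y := by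
  intro x y hx hy
  rw [hh _ (mul_ne_zero hx hy), hk _ (mul_ne_zero hx hy), hh x hx, hh y hy,
    hk x hx, hk y hy, hm, hl x y hx hy]
  push_cast
  ring
end

section
/- Let 𝔽 be a field and 𝕂 a field containing 𝔽, and let λ, μ ∈ 𝕂 be not both zero with λ ≠ 0 and μ ≠ 0. If a function f : 𝔽 → 𝕂 satisfies λ[f(xy) − f(x)y − x·f(y)] + μ[f(xy) − f(x)f(y)] = 0 for all x, y ∈ 𝔽, then either f is identically zero or f(x) = ((μ−λ)/μ)·x for all x ∈ 𝔽. -/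
theorem stmt_14 (K : Type*) [Field K] (F : Subfield K) (lam mu : K)
    (hlam : lam ≠ 0) (hmu : mu ≠ 0) (f : F → K)
    (heq : ∀ x y : F,
      lam * (f (x * y) - f x * y - x * f y) + mu * (f (x * y) - f x * f y) = 0) :
    (∀ x : F, f x = 0) ∨ ∀ x : F, f x = ((mu - lam) / mu) * x := by
  have key : ∀ x : F, mu * (1 - f 1) * f x = lam * f 1 * x := by
    intro x
    have h := heq x 1
    simp only [mul_one] at h
    push_cast at h
    linear_combination h
  have h1 : f 1 * (mu * (1 - f 1) - lam) = 0 := by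
    have h := key 1
    push_cast at h
    linear_combination h
  rcases mul_eq_zero.mp h1 with hf1 | hc
  · left
    intro x
    have h := key x
    rw [hf1] at h
    simp only [sub_zero, mul_one, mul_zero, zero_mul] at h
    exact (mul_eq_zero.mp h).resolve_left hmu
  · right
    intro x
    have h := key x
    have hc' : mu * (1 - f 1) = lam := by linear_combination hc
    rw [hc'] at h
    have hfx : f x = f 1 * ↑x := mul_left_cancel₀ hlam (by linear_combination h)
    rw [hfx]
    field_simp
    linear_combination (-(↑x : K)) * hc
end

section
/- Let P be a subring of a ring Q with no zero divisors, and suppose f : P → Q satisfies both f(xy) = f(x)f(y) and f(xy) = f(x)y + x·f(y) for all x, y ∈ P. If there exists y* ∈ P with f(y*) ≠ y*, then f is identically zero. -/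
theorem stmt_16 (Q : Type*) [Ring Q] [NoZeroDivisors Q] (P : Subring Q) (f : P → Q)
    (hmul : ∀ x y : P, f (x * y) = f x * f y)
    (hleib : ∀ x y : P, f (x * y) = f x * y + x * f y)
    (hy : ∃ y : P, f y ≠ y) :
    ∀ x : P, f x = 0 := by
  obtain ⟨y₀, hy₀⟩ := hy
  have f0 : f 0 = 0 := by
    have h := hleib 0 0
    simpa using h
  have hy0ne : (y₀ : Q) ≠ 0 := by
    intro h
    apply hy₀
    have hz : y₀ = 0 := Subtype.ext h
    rw [hz, f0]
    simp
  have key : ∀ x y : P, f x * (f y - ↑y) = ↑x * f y := by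
    intro x y
    have h2 := hleib x y
    rw [hmul x y] at h2
    rw [mul_sub, h2, add_sub_cancel_left]
  by_cases ha : f y₀ = 0
  · intro x
    have h := key x y₀
    rw [ha, zero_sub, mul_neg, mul_zero, neg_eq_zero] at h
    rcases mul_eq_zero.mp h with h' | h'
    · exact h'
    · exact absurd h' hy0ne
  · have hsq : ∀ x : P, f x * ↑x = (↑x : Q) * ↑x := by
      intro x
      have h1 := key x y₀
      have h2 := key (x * x) y₀
      rw [hmul x x] at h2
      push_cast at h2
      have h3 : f x * f x * (f y₀ - ↑y₀) = f x * ↑x * f y₀ := by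
        rw [mul_assoc, h1, ← mul_assoc]
      rw [h3] at h2
      have h4 : (f x * ↑x - ↑x * ↑x) * f y₀ = 0 := by
        rw [sub_mul, h2, sub_self]
      rcases mul_eq_zero.mp h4 with h' | h'
      · exact sub_eq_zero.mp h'
      · exact absurd h' ha
    exfalso
    have h1 := key y₀ y₀
    have h2 : f y₀ * (f y₀ - ↑y₀) * ↑y₀ = ↑y₀ * f y₀ * ↑y₀ := by rw [h1]
    have h3 : f y₀ * ((f y₀ - ↑y₀) * ↑y₀) = 0 := by
      rw [sub_mul, hsq y₀, sub_self, mul_zero]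
    rw [← mul_assoc] at h3
    rw [h3] at h2
    have h4 : (↑y₀ : Q) * (↑y₀ * ↑y₀) = 0 := by
      rw [mul_assoc, hsq y₀] at h2
      exact h2.symm
    rcases mul_eq_zero.mp h4 with h' | h'
    · exact hy0ne h'
    · rcases mul_eq_zero.mp h' with h'' | h'' <;> exact hy0ne h''
end
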